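/- Let H be a complex Hilbert space, A : H → H a bounded self-adjoint operator with trivial kernel, and U a unitary operator on H such that U(range(A)) ∩ range(A) = {0}. Define B : H → H ⊕ H by Bx = (Ax, UAU⁻¹x). Then the range of B is dense in H ⊕ H, and moreover (H ⊕ {0}) ∩ range(B) = ({0} ⊕ H) ∩ range(B) = {0}. -/

import Mathlib

/-- Let `A` be bounded self-adjoint with trivial kernel and `U` unitary with
`U(range A) ∩ range A = {0}`. Define `B x = (Ax, U A U⁻¹ x)`. Then `B` has dense range and
`(H ⊕ {0}) ∩ range B = ({0} ⊕ H) ∩ range B = {0}`. -/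
theorem stmt8 {H : Type*} [NormedAddCommGroup H] [InnerProductSpace ℂ H] [CompleteSpace H]
    (A : H →L[ℂ] H) (hA : IsSelfAdjoint A) (hAinj : Function.Injective A)
    (U : H ≃ₗᵢ[ℂ] H) (hU : (U '' Set.range A) ∩ Set.range A ⊆ {0}) :
    DenseRange (fun x : H => ((A x, U (A (U.symm x))) : H × H)) ∧
    (∀ x : H, U (A (U.symm x)) = 0 → A x = 0) ∧
    (∀ x : H, A x = 0 → U (A (U.symm x)) = 0) := by
  have hA0 : ∀ y : H, A y = 0 → y = 0 := fun y hy => hAinj (by simpa using hy)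
  refine ⟨?_, ?_, ?_⟩
  · -- density
    let T : H →ₗ[ℂ] WithLp 2 (H × H) :=
      { toFun := fun x => (WithLp.equiv 2 (H × H)).symm (A x, U (A (U.symm x)))
        map_add' := by
          intro x y
          apply (WithLp.equiv 2 (H × H)).injective
          simp
        map_smul' := by
          intro c x
          apply (WithLp.equiv 2 (H × H)).injective
          simp }
    have hperp : (LinearMap.range T)ᗮ = ⊥ := by
      rw [Submodule.eq_bot_iff]
      intro w hw
      have hw' : ∀ x : H, inner (𝕜 := ℂ) (T x) w = 0 := fun x =>
        (Submodule.mem_orthogonal _ _).1 hw (T x) (LinearMap.mem_range_self T x)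
      have key : ∀ x : H,
          inner (𝕜 := ℂ) x (A w.ofLp.1 + U (A (U.symm w.ofLp.2))) = 0 := by
        intro x
        have h1 : inner (𝕜 := ℂ) (A x) w.ofLp.1 = inner (𝕜 := ℂ) x (A w.ofLp.1) := by
          conv_rhs => rw [← hA.adjoint_eq]
          rw [ContinuousLinearMap.adjoint_inner_right]
        have h2 : inner (𝕜 := ℂ) (U (A (U.symm x))) w.ofLp.2
            = inner (𝕜 := ℂ) x (U (A (U.symm w.ofLp.2))) := by
          conv_lhs => rw [← U.apply_symm_apply w.ofLp.2]
          rw [U.inner_map_map]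
          conv_lhs => rw [show inner (𝕜 := ℂ) (A (U.symm x)) (U.symm w.ofLp.2)
            = inner (𝕜 := ℂ) (U.symm x) (A (U.symm w.ofLp.2)) by
              conv_rhs => rw [← hA.adjoint_eq]
              rw [ContinuousLinearMap.adjoint_inner_right]]
          conv_rhs => rw [← U.apply_symm_apply x, U.inner_map_map]
        have := hw' x
        rw [WithLp.prod_inner_apply] at this
        simp only [T, LinearMap.coe_mk, AddHom.coe_mk, WithLp.equiv_symm_apply,
          WithLp.ofLp_toLp] at this
        rw [inner_add_right, ← h1, ← h2]
        exact this
      have hsum : A w.ofLp.1 + U (A (U.symm w.ofLp.2)) = 0 := by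
        have := key (A w.ofLp.1 + U (A (U.symm w.ofLp.2)))
        exact inner_self_eq_zero.mp this
      have hmem : A w.ofLp.1 ∈ (U '' Set.range A) ∩ Set.range A := by
        constructor
        · refine ⟨A (-(U.symm w.ofLp.2)), ⟨_, rfl⟩, ?_⟩
          rw [map_neg, map_neg]
          exact neg_eq_of_add_eq_zero_left hsum
        · exact ⟨w.ofLp.1, rfl⟩
      have hA1 : A w.ofLp.1 = 0 := hU hmem
      have hw1 : w.ofLp.1 = 0 := hA0 _ hA1
      have hU2 : U (A (U.symm w.ofLp.2)) = 0 := by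
        have := hsum; rw [hA1, zero_add] at this; exact this
      have hw2 : w.ofLp.2 = 0 := by
        have h2 : A (U.symm w.ofLp.2) = 0 := by
          have := congrArg U.symm hU2
          simpa using this
        have := hA0 _ h2
        have := congrArg U this
        simpa using this
      apply (WithLp.equiv 2 (H × H)).injective
      ext
      · exact hw1
      · exact hw2
    have hdense : Dense ((LinearMap.range T : Submodule ℂ (WithLp 2 (H × H))) : Set (WithLp 2 (H × H))) :=
      Submodule.dense_iff_topologicalClosure_eq_top.mpr
        (Submodule.topologicalClosure_eq_top_iff.mpr hperp)
    have hrange : Set.range (fun x : H => ((A x, U (A (U.symm x))) : H × H))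
        = (WithLp.prodContinuousLinearEquiv 2 ℂ H H) ''
          ((LinearMap.range T : Submodule ℂ (WithLp 2 (H × H))) : Set _) := by
      ext p
      simp only [Set.mem_range, Set.mem_image, SetLike.mem_coe, LinearMap.mem_range]
      constructor
      · rintro ⟨x, rfl⟩
        exact ⟨T x, ⟨x, rfl⟩, rfl⟩
      · rintro ⟨q, ⟨x, rfl⟩, rfl⟩
        exact ⟨x, rfl⟩
    rw [DenseRange, hrange]
    exact DenseRange.dense_image
      (WithLp.prodContinuousLinearEquiv 2 ℂ H H).surjective.denseRange
      (WithLp.prodContinuousLinearEquiv 2 ℂ H H).continuous hdense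
  · intro x hx
    have h1 : A (U.symm x) = 0 := by
      have := congrArg U.symm hx; simpa using this
    have := hA0 _ h1
    have : x = 0 := by
      have := congrArg U this; simpa using this
    simp [this]
  · intro x hx
    have : x = 0 := hA0 _ hx
    simp [this]
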